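/- Suppose N·p is an integer. Then the mean absolute deviation of the binomial distribution from its mean satisfies Σ_{i=0}^N |i − N·p|·Bin(N, p)(i) ≤ √(2·N·p·(1 − p)/π) ≤ √(N/(2π)). -/

import Mathlib

open Finset

section Aux
open Real Nat

private lemma sqrt_pi_le_stirlingSeq (n : ℕ) (hn : 1 ≤ n) :
    Real.sqrt Real.pi ≤ Stirling.stirlingSeq n := by
  obtain ⟨k, rfl⟩ := Nat.exists_eq_add_of_le hn
  have h1 : Filter.Tendsto (fun k : ℕ => Stirling.stirlingSeq (1 + k)) Filter.atTop
      (nhds (Real.sqrt Real.pi)) := by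
    have := Stirling.tendsto_stirlingSeq_sqrt_pi
    exact this.comp (Filter.tendsto_add_atTop_nat 1 |>.comp Filter.tendsto_id)
      |>.congr (by intro x; simp [Nat.add_comm])
  have h2 : Antitone fun k : ℕ => Stirling.stirlingSeq (1 + k) := by
    intro a b hab
    simpa [Nat.add_comm] using Stirling.stirlingSeq'_antitone hab
  exact h2.le_of_tendsto h1 k

private lemma stirling_le (a b : ℕ) (ha : 1 ≤ a) (hab : a ≤ b) :
    Stirling.stirlingSeq b ≤ Stirling.stirlingSeq a := by
  obtain ⟨c, rfl⟩ := Nat.exists_eq_add_of_le ha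
  obtain ⟨d, rfl⟩ := Nat.exists_eq_add_of_le hab
  have := Stirling.stirlingSeq'_antitone (show c ≤ c + d by omega)
  simp only [Function.comp_apply, Nat.succ_eq_add_one] at this
  have e1 : 1 + c + d = c + d + 1 := by omega
  have e2 : 1 + c = c + 1 := by omega
  rw [e1, e2]; exact this

private lemma fact_eq (n : ℕ) (hn : 1 ≤ n) :
    (n ! : ℝ) = Stirling.stirlingSeq n * Real.sqrt (2 * n) * ((n : ℝ) / Real.exp 1) ^ n := by
  have h : Real.sqrt (2 * (n:ℝ)) * ((n:ℝ) / Real.exp 1) ^ n ≠ 0 := by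
    have : (0:ℝ) < n := by exact_mod_cast hn
    positivity
  rw [Stirling.stirlingSeq]
  field_simp

private lemma mode_bound (m k : ℕ) (hm : 1 ≤ m) (hk : 1 ≤ k) (p : ℝ)
    (hp : (m : ℝ) = ((m + k : ℕ) : ℝ) * p) :
    (((m + k).choose m : ℕ) : ℝ) * p ^ m * (1 - p) ^ k
      ≤ 1 / Real.sqrt (2 * Real.pi * ((m + k : ℕ) : ℝ) * p * (1 - p)) := by
  set N := m + k with hN
  have hmR : (0:ℝ) < m := by exact_mod_cast hm
  have hkR : (0:ℝ) < k := by exact_mod_cast hk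
  have hNR : (0:ℝ) < N := by push_cast [hN]; linarith
  have hpv : p = (m : ℝ) / N := by
    field_simp at hp ⊢; linarith [hp]
  have hqv : 1 - p = (k : ℝ) / N := by
    rw [hpv]; field_simp; push_cast [hN]; ring
  have hch : ((N.choose m : ℕ) : ℝ) = (N ! : ℝ) / ((m ! : ℝ) * (k ! : ℝ)) := by
    have h := Nat.choose_mul_factorial_mul_factorial (show m ≤ N by omega)
    have hsub : N - m = k := by omega
    rw [hsub] at h
    have := congrArg (fun x : ℕ => (x : ℝ)) h
    push_cast at this
    field_simp
    linarith [this]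
  have hfm := fact_eq m hm
  have hfk := fact_eq k hk
  have hfN := fact_eq N (by omega)
  set sN := Stirling.stirlingSeq N
  set sm := Stirling.stirlingSeq m
  set sk := Stirling.stirlingSeq k
  have hsm : Real.sqrt Real.pi ≤ sm := sqrt_pi_le_stirlingSeq m hm
  have hsk : Real.sqrt Real.pi ≤ sk := sqrt_pi_le_stirlingSeq k hk
  have hsN : sN ≤ sm := stirling_le m N hm (by omega)
  have hpi : (0:ℝ) < Real.sqrt Real.pi := Real.sqrt_pos.mpr Real.pi_pos
  have hsmpos : 0 < sm := lt_of_lt_of_le hpi hsm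
  have hskpos : 0 < sk := lt_of_lt_of_le hpi hsk
  have hsNpos : 0 < sN := by
    obtain ⟨t, ht⟩ : ∃ t, N = t + 1 := ⟨N - 1, by omega⟩
    show 0 < Stirling.stirlingSeq N
    rw [ht]; exact Stirling.stirlingSeq'_pos t
  have key : ((N.choose m : ℕ) : ℝ) * p ^ m * (1 - p) ^ k
      = (sN / (sm * sk)) * (Real.sqrt (2 * N) / (Real.sqrt (2 * m) * Real.sqrt (2 * k))) := by
    rw [hch, hfm, hfk, hfN, hqv, hpv]
    have hNc : ((N:ℝ))^N = (N:ℝ)^m * (N:ℝ)^k := by rw [← pow_add]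
    have hexp : Real.exp ((N:ℕ):ℝ) = Real.exp m * Real.exp k := by
      rw [← Real.exp_add]; congr 1; push_cast [hN]; ring
    have h2m : (0:ℝ) < Real.sqrt (2 * m) := Real.sqrt_pos.mpr (by linarith)
    have h2k : (0:ℝ) < Real.sqrt (2 * k) := Real.sqrt_pos.mpr (by linarith)
    have hmne : ((m:ℝ))^m ≠ 0 := by positivity
    have hkne : ((k:ℝ))^k ≠ 0 := by positivity
    have hNne : ((N:ℝ))^N ≠ 0 := by positivity
    rw [div_pow, div_pow, div_pow, div_pow, div_pow]
    field_simp
    rw [hNc, show Real.exp 1 ^ N = Real.exp 1 ^ m * Real.exp 1 ^ k by rw [hN, pow_add]]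
    ring
  rw [key]
  have hprod : 2 * Real.pi * ((N:ℕ):ℝ) * p * (1 - p) = 2 * Real.pi * m * k / N := by
    rw [hqv, hpv]; field_simp
  rw [hprod]
  have hRHS : 1 / Real.sqrt (2 * Real.pi * m * k / N)
      = Real.sqrt ((N:ℝ) / (2 * Real.pi * m * k)) := by
    rw [one_div, ← Real.sqrt_inv]; congr 1
    rw [inv_div]
  rw [hRHS]
  have step1 : sN / (sm * sk) ≤ 1 / Real.sqrt Real.pi := by
    rw [div_le_div_iff₀ (by positivity) hpi]
    have := mul_le_mul hsN hsk hpi.le hsmpos.le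
    linarith [this]
  have hfrac : 0 ≤ Real.sqrt (2 * N) / (Real.sqrt (2 * m) * Real.sqrt (2 * k)) := by positivity
  calc sN / (sm * sk) * (Real.sqrt (2 * N) / (Real.sqrt (2 * m) * Real.sqrt (2 * k)))
      ≤ (1 / Real.sqrt Real.pi) * (Real.sqrt (2 * N) / (Real.sqrt (2 * m) * Real.sqrt (2 * k))) :=
        mul_le_mul_of_nonneg_right step1 hfrac
    _ = Real.sqrt (2 * N) / (Real.sqrt Real.pi * Real.sqrt (2 * m) * Real.sqrt (2 * k)) := by
        field_simp
    _ = Real.sqrt (2 * N) / Real.sqrt (Real.pi * (2 * m) * (2 * k)) := by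
        rw [Real.sqrt_mul (by positivity : (0:ℝ) ≤ Real.pi * (2 * m)),
          Real.sqrt_mul Real.pi_pos.le]
    _ = Real.sqrt ((2 * N) / (Real.pi * (2 * m) * (2 * k))) :=
        (Real.sqrt_div (by positivity) _).symm
    _ = Real.sqrt ((N:ℝ) / (2 * Real.pi * m * k)) := by
        congr 1; rw [div_eq_div_iff (by positivity) (by positivity)]; ring

end Aux

/-- The probability mass function of the binomial distribution with parameters
`N` and `p`: `Bin(N, p)(i) = C(N, i) · p^i · (1 - p)^(N - i)`. -/
noncomputable def binPMF (N : ℕ) (p : ℝ) (i : ℕ) : ℝ :=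
  (N.choose i : ℝ) * p ^ i * (1 - p) ^ (N - i)

private lemma step_ident (n j : ℕ) (p : ℝ) :
    (((j + 1 : ℕ) : ℝ) - ((n + 1 : ℕ) : ℝ) * p) * binPMF (n + 1) p (j + 1)
      = ((n + 1 : ℕ) : ℝ) * p * (1 - p) * (binPMF n p j - binPMF n p (j + 1)) := by
  rcases lt_trichotomy j n with h | rfl | h
  · obtain ⟨t, rfl⟩ : ∃ t, n = j + t + 1 := ⟨n - j - 1, by omega⟩
    unfold binPMF
    have e1 : j + t + 1 + 1 - (j + 1) = t + 1 := by omega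
    have e2 : j + t + 1 - j = t + 1 := by omega
    have e3 : j + t + 1 - (j + 1) = t := by omega
    rw [e1, e2, e3]
    have hP : ((j + t + 1 + 1).choose (j + 1) : ℝ)
        = ((j + t + 1).choose j : ℝ) + ((j + t + 1).choose (j + 1) : ℝ) := by
      rw [show j + t + 1 + 1 = (j + t + 1) + 1 from rfl, Nat.choose_succ_succ]
      push_cast; ring
    have hM : ((j : ℝ) + 1) * (((j + t + 1).choose j : ℝ) + ((j + t + 1).choose (j + 1) : ℝ))
        = ((j + t + 1 : ℕ) + 1 : ℝ) * ((j + t + 1).choose j : ℝ) := by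
      have h2 := Nat.add_one_mul_choose_eq (j + t + 1) j
      rw [Nat.choose_succ_succ (j + t + 1) j] at h2
      have h3 := congrArg (fun x : ℕ => (x : ℝ)) h2
      push_cast at h3
      push_cast
      linarith [h3]
    rw [hP]
    push_cast
    push_cast at hM
    linear_combination (p ^ (j + 1) * (1 - p) ^ (t + 1)) * hM
  · unfold binPMF
    simp [Nat.choose_succ_self, Nat.sub_self]
    ring
  · unfold binPMF
    have h1 : (n + 1).choose (j + 1) = 0 := Nat.choose_eq_zero_of_lt (by omega)
    have h2 : n.choose j = 0 := Nat.choose_eq_zero_of_lt (by omega)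
    have h3 : n.choose (j + 1) = 0 := Nat.choose_eq_zero_of_lt (by omega)
    rw [h1, h2, h3]
    simp

private lemma tail_sum (n : ℕ) (p : ℝ) (a b : ℕ) (hab : a ≤ b) :
    ∑ i ∈ Finset.Ioc a b, (((i : ℕ) : ℝ) - ((n + 1 : ℕ) : ℝ) * p) * binPMF (n + 1) p i
      = ((n + 1 : ℕ) : ℝ) * p * (1 - p) * (binPMF n p a - binPMF n p b) := by
  induction b with
  | zero =>
    have : a = 0 := by omega
    subst this; simp
  | succ b ih =>
    rcases Nat.eq_or_lt_of_le hab with rfl | h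
    · simp
    · have hab' : a ≤ b := by omega
      rw [Finset.sum_Ioc_succ_top (by omega), ih hab', step_ident]
      ring

private lemma split_sum (g : ℕ → ℝ) (a N : ℕ) (h : a ≤ N) :
    ∑ i ∈ Finset.range (N + 1), g i
      = (∑ i ∈ Finset.range (a + 1), g i) + ∑ i ∈ Finset.Ioc a N, g i := by
  rw [Finset.range_eq_Ico,
    ← Finset.sum_Ico_consecutive g (Nat.zero_le (a + 1)) (by omega : a + 1 ≤ N + 1)]
  rw [show Finset.Ico (a + 1) (N + 1) = Finset.Ioc a N by
    ext i; simp only [Finset.mem_Ico, Finset.mem_Ioc]; omega]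
  rw [← Finset.range_eq_Ico]

private lemma abs_helper (x : ℝ) : |x| = 2 * max x 0 - x := by
  rcases le_or_gt 0 x with hx | hx
  · rw [abs_of_nonneg hx, max_eq_left hx]; ring
  · rw [abs_of_neg hx, max_eq_right hx.le]; ring

/-- If `N·p` is an integer, then the mean absolute deviation of the binomial
distribution from its mean satisfies
`Σ_{i=0}^N |i - N·p|·Bin(N,p)(i) ≤ √(2·N·p·(1-p)/π) ≤ √(N/(2π))`. -/
theorem binomial_mad_le (N : ℕ) (hN : 0 < N) (p : ℝ) (hp0 : 0 ≤ p) (hp1 : p ≤ 1)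
    (m : ℕ) (hm : (m : ℝ) = (N : ℝ) * p) :
    (∑ i ∈ Finset.range (N + 1), |(i : ℝ) - (N : ℝ) * p| * binPMF N p i
        ≤ Real.sqrt (2 * (N : ℝ) * p * (1 - p) / Real.pi)) ∧
      Real.sqrt (2 * (N : ℝ) * p * (1 - p) / Real.pi)
        ≤ Real.sqrt ((N : ℝ) / (2 * Real.pi)) := by
  constructor
  · -- first inequality
    rcases eq_or_lt_of_le hp0 with hp0' | hp0'
    · -- p = 0
      have hsum : ∑ i ∈ Finset.range (N + 1), |(i : ℝ) - (N : ℝ) * p| * binPMF N p i = 0 := by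
        apply Finset.sum_eq_zero
        intro i _
        rcases Nat.eq_zero_or_pos i with rfl | hi
        · simp [← hp0']
        · simp [binPMF, ← hp0', zero_pow (by omega : i ≠ 0)]
      rw [hsum]
      positivity
    rcases eq_or_lt_of_le hp1 with hp1' | hp1'
    · -- p = 1
      have hsum : ∑ i ∈ Finset.range (N + 1), |(i : ℝ) - (N : ℝ) * p| * binPMF N p i = 0 := by
        apply Finset.sum_eq_zero
        intro i hi
        simp only [Finset.mem_range] at hi
        rcases eq_or_lt_of_le (Nat.lt_succ_iff.mp hi) with rfl | hiN
        · simp [hp1']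
        · simp [binPMF, ← hp1', zero_pow (by omega : N - i ≠ 0)]
      rw [hsum]
      positivity
    -- main case 0 < p < 1
    obtain ⟨n, rfl⟩ : ∃ n, N = n + 1 := ⟨N - 1, by omega⟩
    have hNR : (0:ℝ) < ((n + 1 : ℕ) : ℝ) := by positivity
    have hq0 : 0 < 1 - p := by linarith
    have hm1 : 1 ≤ m := by
      by_contra hc
      have h0 : m = 0 := by omega
      rw [h0, Nat.cast_zero] at hm
      nlinarith [hm, hNR, hp0']
    have hmN : m ≤ n := by
      by_contra hc
      have hle : (n + 1 : ℕ) ≤ m := by omega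
      have : ((n+1:ℕ):ℝ) ≤ (m:ℝ) := by exact_mod_cast hle
      nlinarith [this]
    set k := n + 1 - m with hk
    have hk1 : 1 ≤ k := by omega
    have hkR : (k : ℝ) = ((n + 1 : ℕ) : ℝ) * (1 - p) := by
      have h1 : (k : ℝ) = ((n + 1 : ℕ) : ℝ) - (m : ℝ) := by
        rw [hk, Nat.cast_sub (by omega : m ≤ n + 1)]
      rw [h1, hm]; ring
    have b3 : binPMF n p (n + 1) = 0 := by
      simp [binPMF, Nat.choose_eq_zero_of_lt (Nat.lt_succ_self n)]
    have mean0 : ∑ i ∈ Finset.range (n + 1 + 1),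
        ((i : ℝ) - ((n + 1 : ℕ) : ℝ) * p) * binPMF (n + 1) p i = 0 := by
      rw [split_sum _ 0 (n + 1) (by omega), tail_sum n p 0 (n + 1) (by omega)]
      rw [Finset.sum_range_one]
      have c1 : binPMF (n + 1) p 0 = (1 - p) ^ (n + 1) := by simp [binPMF]
      have c2 : binPMF n p 0 = (1 - p) ^ n := by simp [binPMF]
      rw [c1, c2, b3]
      push_cast
      ring
    have pospart : ∑ i ∈ Finset.range (n + 1 + 1),
        max ((i : ℝ) - ((n + 1 : ℕ) : ℝ) * p) 0 * binPMF (n + 1) p i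
        = ((n + 1 : ℕ) : ℝ) * p * (1 - p) * binPMF n p m := by
      rw [split_sum _ m (n + 1) (by omega : m ≤ n + 1)]
      have hz : ∑ i ∈ Finset.range (m + 1),
          max ((i : ℝ) - ((n + 1 : ℕ) : ℝ) * p) 0 * binPMF (n + 1) p i = 0 := by
        apply Finset.sum_eq_zero
        intro i hi
        simp only [Finset.mem_range] at hi
        have hle : (i : ℝ) ≤ (m : ℝ) := by exact_mod_cast Nat.lt_succ_iff.mp hi
        have hmax : max ((i : ℝ) - ((n + 1 : ℕ) : ℝ) * p) 0 = 0 :=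
          max_eq_right (by rw [← hm]; linarith)
        rw [hmax, zero_mul]
      have hcg : ∑ i ∈ Finset.Ioc m (n + 1),
          max ((i : ℝ) - ((n + 1 : ℕ) : ℝ) * p) 0 * binPMF (n + 1) p i
          = ∑ i ∈ Finset.Ioc m (n + 1),
            ((i : ℝ) - ((n + 1 : ℕ) : ℝ) * p) * binPMF (n + 1) p i := by
        apply Finset.sum_congr rfl
        intro i hi
        have hmi : m < i := (Finset.mem_Ioc.mp hi).1
        have : (m : ℝ) < (i : ℝ) := by exact_mod_cast hmi
        rw [max_eq_left (by rw [← hm]; linarith)]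
      rw [hz, hcg, tail_sum n p m (n + 1) (by omega), b3]
      ring
    have hS : ∑ i ∈ Finset.range (n + 1 + 1),
        |(i : ℝ) - ((n + 1 : ℕ) : ℝ) * p| * binPMF (n + 1) p i
        = 2 * (((n + 1 : ℕ) : ℝ) * p * (1 - p)) * binPMF n p m := by
      have hpt : ∀ i ∈ Finset.range (n + 1 + 1),
          |(i : ℝ) - ((n + 1 : ℕ) : ℝ) * p| * binPMF (n + 1) p i
          = 2 * (max ((i : ℝ) - ((n + 1 : ℕ) : ℝ) * p) 0 * binPMF (n + 1) p i)
            - ((i : ℝ) - ((n + 1 : ℕ) : ℝ) * p) * binPMF (n + 1) p i := by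
        intro i _
        rw [abs_helper]; ring
      rw [Finset.sum_congr rfl hpt, Finset.sum_sub_distrib, ← Finset.mul_sum, pospart, mean0]
      ring
    have hmk : m + k = n + 1 := by omega
    have hid : (n + 1) * n.choose m = k * (n + 1).choose m := by
      have h1 := Nat.add_one_mul_choose_eq n (k - 1)
      rw [show (k - 1) + 1 = k by omega] at h1
      have h2 : n.choose (k - 1) = n.choose m := by
        rw [show k - 1 = n - m by omega]
        exact Nat.choose_symm (by omega)
      have h3 : (n + 1).choose k = (n + 1).choose m := by
        rw [show k = (n + 1) - m by omega]
        exact Nat.choose_symm (by omega)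
      rw [h2, h3] at h1
      rw [h1, Nat.mul_comm]
    have hconv : binPMF n p m = binPMF (n + 1) p m := by
      unfold binPMF
      have e1 : n - m = k - 1 := by omega
      have e2 : n + 1 - m = k := by omega
      rw [e1, e2]
      have hidR : ((n : ℝ) + 1) * (n.choose m : ℝ) = (k : ℝ) * ((n + 1).choose m : ℝ) := by
        exact_mod_cast congrArg (fun x : ℕ => (x : ℝ)) hid
      have hkq : (k : ℝ) = ((n : ℝ) + 1) * (1 - p) := by push_cast at hkR ⊢; linarith [hkR]
      have hcm : (n.choose m : ℝ) = (1 - p) * ((n + 1).choose m : ℝ) := by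
        have hne : (n : ℝ) + 1 ≠ 0 := by positivity
        rw [hkq] at hidR
        apply mul_left_cancel₀ hne
        linear_combination hidR
      rw [hcm]
      have hpow : (1 - p) ^ k = (1 - p) ^ (k - 1) * (1 - p) := by
        rw [← pow_succ, show k - 1 + 1 = k by omega]
      rw [hpow]; ring
    have hbin : binPMF (n + 1) p m = (((n + 1).choose m : ℕ) : ℝ) * p ^ m * (1 - p) ^ k := by
      unfold binPMF
      rw [show n + 1 - m = k by omega]
    have hmode := mode_bound m k hm1 hk1 p (by rw [hmk]; exact hm)
    rw [hmk] at hmode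
    rw [← hbin] at hmode
    set c : ℝ := ((n + 1 : ℕ) : ℝ) * p * (1 - p) with hc
    have hcpos : 0 < c := by rw [hc]; positivity
    have hsq : (0:ℝ) < Real.sqrt (2 * Real.pi * ((n + 1 : ℕ) : ℝ) * p * (1 - p)) := by
      apply Real.sqrt_pos.mpr; positivity
    have key2 : Real.sqrt (2 * ((n + 1 : ℕ) : ℝ) * p * (1 - p) / Real.pi)
        = 2 * c / Real.sqrt (2 * Real.pi * ((n + 1 : ℕ) : ℝ) * p * (1 - p)) := by
      rw [eq_div_iff (ne_of_gt hsq)]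
      rw [← Real.sqrt_mul (by positivity)]
      rw [show (2 * ((n + 1 : ℕ) : ℝ) * p * (1 - p) / Real.pi)
          * (2 * Real.pi * ((n + 1 : ℕ) : ℝ) * p * (1 - p)) = (2 * c) ^ 2 by
        rw [hc]; field_simp]
      exact Real.sqrt_sq (by positivity)
    rw [hS, hconv, key2]
    calc 2 * c * binPMF (n + 1) p m
        ≤ 2 * c * (1 / Real.sqrt (2 * Real.pi * ((n + 1 : ℕ) : ℝ) * p * (1 - p))) :=
          mul_le_mul_of_nonneg_left hmode (by positivity)
      _ = 2 * c / Real.sqrt (2 * Real.pi * ((n + 1 : ℕ) : ℝ) * p * (1 - p)) := by ring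
  · -- second inequality
    apply Real.sqrt_le_sqrt
    rw [div_le_div_iff₀ Real.pi_pos (by positivity)]
    have h1 : (0:ℝ) ≤ Real.pi * (N:ℝ) * (2*p-1)^2 := by positivity
    nlinarith [h1]
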